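/- Let m ≥ 1 be a natural number and fix k ≥ m. Then, as the real parameter s tends to +∞, (2m+s)·Γ(m+s+2+s/m)·Γ(k+s) / (m·Γ(m+s)·Γ(k+s+3+s/m)) tends to (1/(1+m))·(m/(1+m))^{k-m}; that is, the closed-form vertex degree distribution of the L-graph with weight f(k)=k+s converges pointwise, as s → ∞, to the geometric distribution of the L-graph with weight f(k)=1. -/

import Mathlib

open Filter Finset

private lemma Gamma_add_nat' (x : ℝ) (hx : 0 < x) (n : ℕ) :
    Real.Gamma (x + n) = Real.Gamma x * ∏ j ∈ range n, (x + j) := by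
  induction n with
  | zero => simp
  | succ n ih =>
    have hxn : x + (n : ℝ) ≠ 0 := by positivity
    have h : (x : ℝ) + ((n + 1 : ℕ) : ℝ) = (x + n) + 1 := by push_cast; ring
    rw [h, Real.Gamma_add_one hxn, ih, prod_range_succ]
    ring

private lemma lin_div_tendsto (a b C : ℝ) (hC : C ≠ 0) :
    Tendsto (fun s : ℝ => (s + a) / (C * s + b)) atTop (nhds (1 / C)) := by
  have ha : Tendsto (fun s : ℝ => a / s) atTop (nhds 0) :=
    tendsto_const_nhds.div_atTop tendsto_id
  have hb : Tendsto (fun s : ℝ => b / s) atTop (nhds 0) :=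
    tendsto_const_nhds.div_atTop tendsto_id
  have h1 : Tendsto (fun s : ℝ => (1 + a / s) / (C + b / s)) atTop (nhds (1 / C)) := by
    have hone : Tendsto (fun s : ℝ => 1 + a / s) atTop (nhds (1 + 0)) :=
      tendsto_const_nhds.add ha
    have hCC : Tendsto (fun s : ℝ => C + b / s) atTop (nhds (C + 0)) :=
      tendsto_const_nhds.add hb
    have := hone.div hCC (by simpa using hC)
    simpa [Pi.div_def] using this
  refine h1.congr' ?_
  filter_upwards [eventually_ge_atTop (1 : ℝ)] with s hs
  have hs0 : s ≠ 0 := by positivity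
  have h2 : s * (1 + a / s) = s + a := by field_simp
  have h3 : s * (C + b / s) = C * s + b := by field_simp
  rw [← h2, ← h3, mul_div_mul_left _ _ hs0]

theorem L_vdd_closed_form_tendsto_geometric (m : ℕ) (hm : 1 ≤ m) (k : ℕ) (hk : m ≤ k) :
    Tendsto
      (fun s : ℝ =>
        (2 * m + s) * Real.Gamma (m + s + 2 + s / m) * Real.Gamma (k + s) /
          (m * Real.Gamma (m + s) * Real.Gamma (k + s + 3 + s / m)))
      atTop
      (nhds ((1 / (1 + (m : ℝ))) * ((m : ℝ) / (1 + m)) ^ (k - m))) := by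
  set n := k - m with hn
  have hm0 : (0 : ℝ) < m := by exact_mod_cast hm
  have hm0' : (m : ℝ) ≠ 0 := hm0.ne'
  have hkm : (k : ℝ) = m + n := by
    rw [hn]
    push_cast [Nat.cast_sub hk]
    ring
  have hC : (1 : ℝ) + 1 / m ≠ 0 := by positivity
  have hC2 : (m : ℝ) * (1 + 1 / m) ≠ 0 := by positivity
  -- the rational-function surrogate
  have hfac : ∀ j ∈ range n,
      Tendsto (fun s : ℝ => ((m : ℝ) + s + j) / (m + s + 2 + s / m + j)) atTop
        (nhds (1 / (1 + 1 / m))) := by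
    intro j _
    refine (lin_div_tendsto ((m : ℝ) + j) ((m : ℝ) + 2 + j) (1 + 1 / m) hC).congr fun s => ?_
    congr 1 <;> ring
  have htail :
      Tendsto (fun s : ℝ => (2 * (m : ℝ) + s) / (m * (m + s + 2 + s / m + n))) atTop
        (nhds (1 / ((m : ℝ) * (1 + 1 / m)))) := by
    refine (lin_div_tendsto (2 * (m : ℝ)) ((m : ℝ) * (m + 2 + n)) ((m : ℝ) * (1 + 1 / m))
      hC2).congr fun s => ?_
    congr 1
    · ring
    · field_simp
      ring
  have hF :
      Tendsto (fun s : ℝ =>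
          (∏ j ∈ range n, ((m : ℝ) + s + j) / (m + s + 2 + s / m + j)) *
            ((2 * (m : ℝ) + s) / (m * (m + s + 2 + s / m + n)))) atTop
        (nhds ((∏ _j ∈ range n, 1 / (1 + 1 / (m : ℝ))) * (1 / ((m : ℝ) * (1 + 1 / m))))) :=
    (tendsto_finset_prod (range n) hfac).mul htail
  have hval : ((∏ _j ∈ range n, 1 / (1 + 1 / (m : ℝ))) * (1 / ((m : ℝ) * (1 + 1 / m)))) =
      (1 / (1 + (m : ℝ))) * ((m : ℝ) / (1 + m)) ^ n := by
    rw [prod_const, card_range]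
    have h1 : 1 / (1 + 1 / (m : ℝ)) = (m : ℝ) / (1 + m) := by
      rw [div_eq_div_iff (by positivity) (by positivity), one_mul, mul_add, mul_one,
        mul_one_div, div_self hm0', add_comm (1:ℝ)]
    have h2 : (m : ℝ) * (1 + 1 / m) = 1 + m := by
      rw [mul_add, mul_one, mul_one_div, div_self hm0']; ring
    rw [h1, h2]
    ring
  rw [← hval]
  refine hF.congr' ?_
  filter_upwards [eventually_ge_atTop (1 : ℝ)] with s hs
  have hs0 : (0 : ℝ) < s := lt_of_lt_of_le one_pos hs
  have hB : (0 : ℝ) < m + s := by positivity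
  have hA : (0 : ℝ) < (m : ℝ) + s + 2 + s / m := by positivity
  have e1 : (k : ℝ) + s = ((m : ℝ) + s) + (n : ℕ) := by rw [hkm]; ring
  have e2 : (k : ℝ) + s + 3 + s / m = ((m : ℝ) + s + 2 + s / m) + ((n + 1 : ℕ) : ℝ) := by
    rw [hkm]; push_cast; ring
  rw [e2, e1, Gamma_add_nat' _ hB, Gamma_add_nat' _ hA, prod_range_succ, prod_div_distrib]
  have hQ : (0 : ℝ) < ∏ j ∈ range n, ((m : ℝ) + s + 2 + s / m + j) :=
    prod_pos fun j _ => by positivity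
  have hAn : (0 : ℝ) < (m : ℝ) + s + 2 + s / m + n := by positivity
  have hGA : Real.Gamma ((m : ℝ) + s + 2 + s / m) ≠ 0 := (Real.Gamma_pos_of_pos hA).ne'
  have hGB : Real.Gamma ((m : ℝ) + s) ≠ 0 := (Real.Gamma_pos_of_pos hB).ne'
  field_simp
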